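/- Let q₀ > 0 and let f : (−∞, 0) → ℝ be measurable with f(q₀²/s) = f(s) for all s < 0. Let z ∈ ℂ ∖ (−∞, 0] and assume ∫_{−∞}^0 |f(s)|·|1/(s−z) − 1/(2s)| ds < ∞ and ∫_{−∞}^0 |f(s)|·|1/(s − q₀²/z) − 1/(2s)| ds < ∞. Then ∫_{−∞}^0 f(s)·(1/(s − q₀²/z) − 1/(2s)) ds = −∫_{−∞}^0 f(s)·(1/(s − z) − 1/(2s)) ds. Consequently, the function δ(z) = exp( (1/(2πi)) ∫_{−∞}^0 f(s)·(1/(s−z) − 1/(2s)) ds ) satisfies the symmetry δ(q₀²/z) = 1/δ(z); moreover, since f is real-valued, conj(δ(conj z)) = 1/δ(z). -/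

import Mathlib

open MeasureTheory Complex

/-- `δ(w) = exp((1/(2πi)) ∫_{−∞}^0 f(s)·(1/(s−w) − 1/(2s)) ds)`. -/
noncomputable def deltaFun (f : ℝ → ℝ) (w : ℂ) : ℂ :=
  Complex.exp ((1 / (2 * (Real.pi : ℂ) * Complex.I)) *
    ∫ s in Set.Iio (0 : ℝ), (f s : ℂ) * (1 / ((s : ℂ) - w) - 1 / (2 * (s : ℂ))))

lemma sub_ne_zero_of_neg (z : ℂ) (hz : z.im ≠ 0 ∨ 0 < z.re) {t : ℝ} (ht : t < 0) :
    (t : ℂ) - z ≠ 0 := by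
  intro h
  have hzz : z = (t : ℂ) := (sub_eq_zero.mp h).symm
  rcases hz with h1 | h1
  · rw [hzz] at h1; simp at h1
  · rw [hzz] at h1; simp at h1; linarith

lemma z_ne_zero (z : ℂ) (hz : z.im ≠ 0 ∨ 0 < z.re) : z ≠ 0 := by
  intro h; rcases hz with h1 | h1 <;> rw [h] at h1 <;> simp at h1

/-- for `f` symmetric under `s ↦ q₀²/s` on `(−∞,0)`, the Cauchy-type
integral is odd under `z ↦ q₀²/z`, and hence `δ(q₀²/z) = 1/δ(z)`; moreover, since `f`
is real-valued, `conj(δ(conj z)) = 1/δ(z)`. -/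
theorem delta_symmetry (q₀ : ℝ) (hq₀ : 0 < q₀) (f : ℝ → ℝ) (hf : Measurable f)
    (hsym : ∀ s : ℝ, s < 0 → f (q₀ ^ 2 / s) = f s)
    (z : ℂ) (hz : z.im ≠ 0 ∨ 0 < z.re)
    (hint1 : IntegrableOn
      (fun s : ℝ => (f s : ℂ) * (1 / ((s : ℂ) - z) - 1 / (2 * (s : ℂ)))) (Set.Iio 0))
    (hint2 : IntegrableOn
      (fun s : ℝ => (f s : ℂ) * (1 / ((s : ℂ) - (q₀ : ℂ) ^ 2 / z) - 1 / (2 * (s : ℂ))))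
      (Set.Iio 0)) :
    (∫ s in Set.Iio (0 : ℝ),
        (f s : ℂ) * (1 / ((s : ℂ) - (q₀ : ℂ) ^ 2 / z) - 1 / (2 * (s : ℂ)))) =
      -∫ s in Set.Iio (0 : ℝ),
        (f s : ℂ) * (1 / ((s : ℂ) - z) - 1 / (2 * (s : ℂ))) ∧
    deltaFun f ((q₀ : ℂ) ^ 2 / z) = 1 / deltaFun f z ∧
    (starRingEnd ℂ) (deltaFun f ((starRingEnd ℂ) z)) = 1 / deltaFun f z := by
  have hq0 : (q₀ : ℝ) ≠ 0 := hq₀.ne'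
  have hqC : (q₀ : ℂ) ≠ 0 := by exact_mod_cast hq0
  have hz0 : z ≠ 0 := z_ne_zero z hz
  -- the map φ t = q₀² / t
  set φ : ℝ → ℝ := fun t => q₀ ^ 2 / t with hφ
  have himg : φ '' Set.Iio 0 = Set.Iio 0 := by
    ext s
    constructor
    · rintro ⟨t, ht, rfl⟩
      simp only [Set.mem_Iio] at ht ⊢
      exact div_neg_of_pos_of_neg (by positivity) ht
    · intro hs
      simp only [Set.mem_Iio] at hs
      refine ⟨q₀ ^ 2 / s, ?_, ?_⟩
      · simp only [Set.mem_Iio]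
        exact div_neg_of_pos_of_neg (by positivity) hs
      · show q₀ ^ 2 / (q₀ ^ 2 / s) = s
        rw [div_div_eq_mul_div, mul_div_cancel_left₀ _ (by positivity : q₀ ^ 2 ≠ 0)]
  have hderiv : ∀ t ∈ Set.Iio (0 : ℝ),
      HasDerivWithinAt φ (q₀ ^ 2 * (-(t ^ 2)⁻¹)) (Set.Iio 0) t := by
    intro t ht
    exact ((hasDerivAt_inv (ne_of_lt ht)).const_mul (q₀ ^ 2)).hasDerivWithinAt
  have hinj : Set.InjOn φ (Set.Iio 0) := by
    intro a ha b hb hab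
    simp only [hφ] at hab
    have ha0 : a ≠ 0 := ne_of_lt ha
    have hb0 : b ≠ 0 := ne_of_lt hb
    field_simp at hab
    exact hab.symm
  set g : ℝ → ℂ := fun s => (f s : ℂ) * (1 / ((s : ℂ) - (q₀ : ℂ) ^ 2 / z) - 1 / (2 * (s : ℂ)))
    with hg
  have key : ∫ s in φ '' Set.Iio 0, g s =
      ∫ t in Set.Iio (0 : ℝ), |q₀ ^ 2 * (-(t ^ 2)⁻¹)| • g (φ t) :=
    integral_image_eq_integral_abs_deriv_smul measurableSet_Iio hderiv hinj g
  rw [himg] at key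
  have hpt : ∀ t ∈ Set.Iio (0 : ℝ),
      |q₀ ^ 2 * (-(t ^ 2)⁻¹)| • g (φ t) =
        -((f t : ℂ) * (1 / ((t : ℂ) - z) - 1 / (2 * (t : ℂ)))) := by
    intro t ht
    have ht0 : t ≠ 0 := ne_of_lt ht
    have htC : (t : ℂ) ≠ 0 := by exact_mod_cast ht0
    have htz : (t : ℂ) - z ≠ 0 := sub_ne_zero_of_neg z hz ht
    have habs : |q₀ ^ 2 * (-(t ^ 2)⁻¹)| = q₀ ^ 2 / t ^ 2 := by
      rw [abs_mul, abs_neg, abs_inv, abs_of_pos (by positivity : (0:ℝ) < q₀ ^ 2),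
        abs_of_pos (by positivity : (0:ℝ) < t ^ 2)]
      ring
    have hzt : z - (t : ℂ) ≠ 0 := by
      intro h; exact htz (by rw [← neg_sub] at h; simpa using congrArg Neg.neg h)
    rw [habs, hg]
    simp only [hφ, hsym t ht]
    push_cast
    rw [real_smul]
    push_cast
    have hA : (q₀ : ℂ) ^ 2 / (t : ℂ) - (q₀ : ℂ) ^ 2 / z =
        (q₀ : ℂ) ^ 2 * (z - (t : ℂ)) / ((t : ℂ) * z) := by
      field_simp
    rw [hA, one_div_div]
    field_simp [hzt, htz]
    ring
  have hintEq : (∫ s in Set.Iio (0 : ℝ),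
      (f s : ℂ) * (1 / ((s : ℂ) - (q₀ : ℂ) ^ 2 / z) - 1 / (2 * (s : ℂ)))) =
      -∫ s in Set.Iio (0 : ℝ), (f s : ℂ) * (1 / ((s : ℂ) - z) - 1 / (2 * (s : ℂ))) := by
    rw [show (∫ s in Set.Iio (0 : ℝ),
      (f s : ℂ) * (1 / ((s : ℂ) - (q₀ : ℂ) ^ 2 / z) - 1 / (2 * (s : ℂ)))) =
      ∫ s in Set.Iio (0 : ℝ), g s from rfl, key]
    rw [setIntegral_congr_fun measurableSet_Iio hpt, integral_neg]
  refine ⟨hintEq, ?_, ?_⟩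
  · rw [deltaFun, deltaFun, hintEq, eq_div_iff (Complex.exp_ne_zero _),
      ← Complex.exp_add]
    simp [mul_neg]
  · rw [deltaFun, deltaFun, ← Complex.exp_conj, eq_div_iff (Complex.exp_ne_zero _),
      ← Complex.exp_add]
    rw [map_mul, ← integral_conj]
    have hconj : ∀ s : ℝ, (starRingEnd ℂ)
        ((f s : ℂ) * (1 / ((s : ℂ) - (starRingEnd ℂ) z) - 1 / (2 * (s : ℂ)))) =
        (f s : ℂ) * (1 / ((s : ℂ) - z) - 1 / (2 * (s : ℂ))) := by
      intro s
      simp [map_mul, map_sub, map_div₀, Complex.conj_ofReal, map_ofNat]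
    simp_rw [hconj]
    have hc : (starRingEnd ℂ) (1 / (2 * (Real.pi : ℂ) * Complex.I)) =
        -(1 / (2 * (Real.pi : ℂ) * Complex.I)) := by
      rw [map_div₀, map_one, map_mul, map_mul, Complex.conj_I, Complex.conj_ofReal,
        map_ofNat, mul_neg, div_neg]
    rw [hc]
    simp [neg_mul]
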